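/- arXiv:2505.11403 — 3 statements merged into one kernel-verified Lean document; each statement's English description precedes it below -/
import Mathlib

section
/- Let σ be a cyclic permutation of an alphabet A of size N ≥ 3 and let δ = σ^j with 1 ≤ j < N and j ≢ 1 (mod N). Then no factor of the infinite word W generated by ψ(a) = a σ(a) is of the form a δ(a) δ²(a); i.e., W contains no strongly (3, δ)-repetition of block length 1. -/
/-- The cyclic shift morphism ψ(a) = a σ(a), extended to words. -/
def psi {A : Type*} (σ : Equiv.Perm A) (w : List A) : List A :=
  w.flatMap (fun a => [a, σ a])

/-- The infinite fixed point W = lim_n ψ^n(a₀). -/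
def Wfix {A : Type*} (σ : Equiv.Perm A) (a₀ : A) (n : ℕ) : A :=
  ((psi σ)^[n + 1] [a₀]).getD n a₀

/-- A finite word u is a factor of an infinite word W if it occurs in W at some position. -/
def IsFactorOf {A : Type*} (u : List A) (W : ℕ → A) : Prop :=
  ∃ i : ℕ, u = (List.range u.length).map (fun k => W (i + k))

section Aux

variable {A : Type*} (σ : Equiv.Perm A) (a₀ : A)

lemma psi_cons (a : A) (t : List A) : psi σ (a :: t) = a :: σ a :: psi σ t := by
  simp [psi]

lemma psi_length (w : List A) : (psi σ w).length = 2 * w.length := by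
  induction w with
  | nil => simp [psi]
  | cons a t ih => rw [psi_cons]; simp at *; omega

lemma psi_getD_even (w : List A) (k : ℕ) (hk : k < w.length) (d : A) :
    (psi σ w).getD (2*k) d = w.getD k d := by
  induction w generalizing k with
  | nil => simp at hk
  | cons a t ih =>
    rw [psi_cons]
    cases k with
    | zero => simp
    | succ k =>
      have h2 : 2 * (k+1) = (2*k) + 1 + 1 := by ring
      rw [h2, List.getD_cons_succ, List.getD_cons_succ, List.getD_cons_succ]
      exact ih k (by simpa using Nat.lt_of_succ_lt_succ hk)

lemma psi_getD_odd (w : List A) (k : ℕ) (hk : k < w.length) (d : A) :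
    (psi σ w).getD (2*k+1) d = σ (w.getD k d) := by
  induction w generalizing k with
  | nil => simp at hk
  | cons a t ih =>
    rw [psi_cons]
    cases k with
    | zero => simp
    | succ k =>
      have h2 : 2 * (k+1) + 1 = (2*k+1) + 1 + 1 := by ring
      rw [h2, List.getD_cons_succ, List.getD_cons_succ, List.getD_cons_succ]
      exact ih k (by simpa using Nat.lt_of_succ_lt_succ hk)

lemma psi_prefix {w v : List A} (h : w <+: v) : psi σ w <+: psi σ v := by
  obtain ⟨t, rfl⟩ := h
  exact ⟨psi σ t, by simp [psi]⟩

lemma L_length (m : ℕ) : ((psi σ)^[m] [a₀]).length = 2 ^ m := by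
  induction m with
  | zero => simp
  | succ m ih =>
    rw [Function.iterate_succ_apply', psi_length, ih, pow_succ]; ring

lemma psi_iterate_prefix {w v : List A} (h : w <+: v) (m : ℕ) :
    (psi σ)^[m] w <+: (psi σ)^[m] v := by
  induction m with
  | zero => simpa
  | succ m ih => rw [Function.iterate_succ_apply', Function.iterate_succ_apply']
                 exact psi_prefix σ ih

lemma L_prefix {m m' : ℕ} (h : m ≤ m') :
    (psi σ)^[m] [a₀] <+: (psi σ)^[m'] [a₀] := by
  induction m' with
  | zero => simp_all
  | succ m' ih =>
    rcases Nat.lt_or_ge m (m'+1) with h' | h'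
    · have step : (psi σ)^[m'] [a₀] <+: (psi σ)^[m'+1] [a₀] := by
        rw [Function.iterate_succ_apply]
        exact psi_iterate_prefix σ ⟨[σ a₀], by simp [psi]⟩ m'
      exact (ih (by omega)).trans step
    · have : m = m' + 1 := by omega
      subst this; exact List.prefix_refl _

lemma getD_of_prefix {w v : List A} (h : w <+: v) {n : ℕ} (hn : n < w.length) (d : A) :
    v.getD n d = w.getD n d := by
  obtain ⟨t, rfl⟩ := h
  unfold List.getD
  rw [List.getElem?_append_left hn]

lemma Wfix_stable (n m : ℕ) (h : n + 1 ≤ m) :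
    Wfix σ a₀ n = ((psi σ)^[m] [a₀]).getD n a₀ := by
  unfold Wfix
  exact (getD_of_prefix (L_prefix σ a₀ h)
    (by rw [L_length]
        exact lt_of_lt_of_le (Nat.lt_two_pow_self (n := n)) (Nat.pow_le_pow_right (by norm_num) (by omega)))
    a₀).symm

lemma Wfix_even (k : ℕ) : Wfix σ a₀ (2*k) = Wfix σ a₀ k := by
  have hk : k < ((psi σ)^[2*k+1] [a₀]).length := by
    rw [L_length]
    calc k < 2 ^ k := Nat.lt_two_pow_self (n := k)
    _ ≤ 2 ^ (2*k+1) := Nat.pow_le_pow_right (by norm_num) (by omega)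
  rw [Wfix_stable σ a₀ (2*k) (2*k+2) (by omega),
      Function.iterate_succ_apply', psi_getD_even σ _ k hk,
      Wfix_stable σ a₀ k (2*k+1) (by omega)]

lemma Wfix_odd (k : ℕ) : Wfix σ a₀ (2*k+1) = σ (Wfix σ a₀ (2*k)) := by
  have hk : k < ((psi σ)^[2*k+1] [a₀]).length := by
    rw [L_length]
    calc k < 2 ^ k := Nat.lt_two_pow_self (n := k)
    _ ≤ 2 ^ (2*k+1) := Nat.pow_le_pow_right (by norm_num) (by omega)
  rw [Wfix_even σ a₀ k,
      Wfix_stable σ a₀ (2*k+1) (2*k+2) (by omega),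
      Function.iterate_succ_apply', psi_getD_odd σ _ k hk,
      Wfix_stable σ a₀ k (2*k+1) (by omega)]

end Aux

/-- for σ a single N-cycle on A with N = |A| ≥ 3 and δ = σ^j with
    1 ≤ j < N, j ≢ 1 (mod N), the word W contains no factor a δ(a) δ²(a), i.e. no
    strongly (3, δ)-repetition of block length 1. -/
theorem no_block_one_rep {A : Type*} [Fintype A] (N : ℕ) (hN : Fintype.card A = N)
    (hN3 : 3 ≤ N) (σ : Equiv.Perm A)
    (hσ : ∀ (a : A) (k : ℕ), (σ ^ k) a = a ↔ N ∣ k)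
    (j : ℕ) (hj1 : 1 ≤ j) (hjN : j < N) (hj : ¬ j ≡ 1 [MOD N])
    (δ : Equiv.Perm A) (hδ : δ = σ ^ j) (a₀ : A) :
    ∀ a : A, ¬ IsFactorOf [a, δ a, δ (δ a)] (Wfix σ a₀) := by
  intro a ⟨i, h⟩
  simp [List.range_succ] at h
  obtain ⟨h0, h1, h2⟩ := h
  -- key contradiction device: no b with δ b = σ b
  have key : ∀ b : A, δ b ≠ σ b := by
    intro b hb
    have hfix : (σ ^ (j-1)) (σ b) = σ b := by
      have : σ ^ j = σ ^ (j - 1) * σ := by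
        rw [← pow_succ]
        congr 1; omega
      rw [hδ, this] at hb
      simpa using hb
    have hdvd : N ∣ j - 1 := (hσ (σ b) (j-1)).mp hfix
    have hz : j - 1 = 0 := Nat.eq_zero_of_dvd_of_lt hdvd (by omega)
    have hj1' : j = 1 := by omega
    subst hj1'
    exact hj rfl
  rcases Nat.even_or_odd i with ⟨k, hk⟩ | ⟨k, hk⟩
  · -- i = 2k : W(i+1) = σ W(i)
    have : Wfix σ a₀ (i+1) = σ (Wfix σ a₀ i) := by
      rw [hk, show k + k = 2*k by ring, ← Wfix_odd]
    rw [← h0, ← h1] at this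
    exact key a this
  · -- i = 2k+1 : W(i+2) = σ W(i+1)
    have : Wfix σ a₀ (i+2) = σ (Wfix σ a₀ (i+1)) := by
      rw [hk, show 2*k+1+2 = 2*(k+1)+1 by ring, show 2*k+1+1 = 2*(k+1) by ring, ← Wfix_odd]
    rw [← h1, ← h2] at this
    exact key (δ a) this
end

section
/- If Y_0 Y_0^(δ) Y_0^(δ²) is a strongly (3, δ)-repetition, then its image under ψ, namely ψ(Y_0) ψ(Y_0^(δ)) ψ(Y_0^(δ²)), is also a strongly (3, δ)-repetition, provided δ = σ^j where ψ(a) = a σ(a). -/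
def twist {A : Type*} (δ : Equiv.Perm A) (w : List A) : List A := w.map δ

lemma psi_append {A : Type*} (σ : Equiv.Perm A) (u v : List A) :
    psi σ (u ++ v) = psi σ u ++ psi σ v := List.flatMap_append ..

lemma psi_twist {A : Type*} (σ : Equiv.Perm A) (j : ℕ) (w : List A) :
    psi σ (twist (σ ^ j) w) = twist (σ ^ j) (psi σ w) := by
  induction w with
  | nil => rfl
  | cons a t ih =>
      simp only [psi, twist, List.map_cons, List.flatMap_cons] at *
      simp [ih]
      have : σ ((σ ^ j) a) = (σ ^ j) (σ a) := by
        have := (Commute.self_pow σ j).eq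
        calc σ ((σ ^ j) a) = (σ * σ ^ j) a := rfl
        _ = (σ ^ j * σ) a := by rw [this]
        _ = _ := rfl
      simp [this]

/-- if Y₀ Y₀^(δ) Y₀^(δ²) is a strongly (3, δ)-repetition (Y₀ nonempty)
    and δ = σ^j, then its ψ-image is again a strongly (3, δ)-repetition
    Z Z^(δ) Z^(δ²) with Z nonempty (namely Z = ψ(Y₀)). -/
theorem psi_image_strong_rep {A : Type*} [Fintype A] (σ : Equiv.Perm A) (j : ℕ)
    (δ : Equiv.Perm A) (hδ : δ = σ ^ j) (Y₀ : List A) (hY : Y₀ ≠ []) :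
    ∃ Z : List A, Z ≠ [] ∧
      psi σ (Y₀ ++ twist δ Y₀ ++ twist (δ ^ 2) Y₀) =
        Z ++ twist δ Z ++ twist (δ ^ 2) Z := by
  refine ⟨psi σ Y₀, ?_, ?_⟩
  · cases Y₀ with
    | nil => exact absurd rfl hY
    | cons a t => simp [psi]
  · subst hδ
    rw [psi_append, psi_append, psi_twist, ← pow_mul, psi_twist, pow_mul]
end

section
/- If σ is a cyclic permutation of an alphabet A of size N ≥ 2, then the morphism ψ(a) = a σ(a) is primitive: there exists an integer n such that for all letters a, b ∈ A, the letter b occurs in ψ^n(a). -/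
lemma pow_mem_psi_iter {A : Type*} (σ : Equiv.Perm A) :
    ∀ (n k : ℕ) (a : A), k ≤ n → (σ ^ k) a ∈ (psi σ)^[n] [a] := by
  intro n
  induction n with
  | zero =>
    intro k a hk
    interval_cases k
    simp
  | succ n ih =>
    intro k a hk
    rw [Function.iterate_succ_apply']
    rcases Nat.lt_or_ge k (n+1) with h | h
    · have := ih k a (Nat.lt_succ_iff.mp h)
      simp only [psi, List.mem_flatMap]
      exact ⟨(σ ^ k) a, this, by simp⟩
    · have hk' : k = n + 1 := le_antisymm hk h
      subst hk'
      have := ih n a le_rfl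
      simp only [psi, List.mem_flatMap]
      refine ⟨(σ ^ n) a, this, ?_⟩
      have he : (σ ^ (n+1)) a = σ ((σ ^ n) a) := by
        rw [pow_succ, Equiv.Perm.mul_apply, ← Equiv.Perm.mul_apply, ← pow_succ, pow_succ',
          Equiv.Perm.mul_apply]
      rw [he]; simp

/-- if σ is a single N-cycle on A with N = |A| ≥ 2, then ψ is primitive:
    some power ψ^n maps every letter a to a word containing every letter b. -/
theorem psi_primitive {A : Type*} [Fintype A] (N : ℕ) (hN : Fintype.card A = N)
    (hN2 : 2 ≤ N) (σ : Equiv.Perm A)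
    (hσ : ∀ (a : A) (k : ℕ), (σ ^ k) a = a ↔ N ∣ k) :
    ∃ n : ℕ, ∀ a b : A, b ∈ (psi σ)^[n] [a] := by
  refine ⟨N - 1, fun a b => ?_⟩
  have hinj : Function.Injective (fun k : Fin N => (σ ^ (k : ℕ)) a) := by
    intro j k hjk
    simp only at hjk
    wlog hle : (j : ℕ) ≤ (k : ℕ) generalizing j k
    · exact (this hjk.symm (le_of_not_ge hle)).symm
    have key : (σ ^ ((k : ℕ) - j)) ((σ ^ (j : ℕ)) a) = (σ ^ (j : ℕ)) a := by
      rw [← Equiv.Perm.mul_apply, ← pow_add, Nat.sub_add_cancel hle, hjk]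
    have hdvd : N ∣ (k : ℕ) - j := (hσ _ _).mp key
    have hlt : (k : ℕ) - j < N := lt_of_le_of_lt (Nat.sub_le _ _) k.isLt
    have h0 : (k : ℕ) - j = 0 := Nat.eq_zero_of_dvd_of_lt hdvd hlt
    exact Fin.ext (le_antisymm hle (Nat.le_of_sub_eq_zero h0))
  have hsurj : Function.Surjective (fun k : Fin N => (σ ^ (k : ℕ)) a) := by
    have hcard : Fintype.card (Fin N) = Fintype.card A := by simp [hN]
    exact ((Fintype.bijective_iff_injective_and_card _).mpr ⟨hinj, hcard⟩).surjective
  obtain ⟨k, hk⟩ := hsurj b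
  have hkle : (k : ℕ) ≤ N - 1 := Nat.le_sub_one_of_lt k.isLt
  rw [← hk]
  exact pow_mem_psi_iter σ (N - 1) k a hkle
end
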